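/- Let s be a Lévy-type discrete process with s[0]=0 and independent integrable increments u[k] = s[k]−s[k−1] that are i.i.d. Fix integers 0 ≤ l, 1 ≤ n_T, and l·n_T < θ < (l+1)·n_T. Then the conditional expectation of s[θ] given the decimated samples (s[i·n_T])_{i=0}^m equals the linear interpolation (1−λ_θ) s[l·n_T] + λ_θ s[(l+1)·n_T], where λ_θ = (θ − l·n_T)/n_T. -/

import Mathlib

open MeasureTheory ProbabilityTheory

/-- Reindexing an i.i.d. family along an injective map preserves independence. -/
lemma aux_iIndepFun_reindex {Ω : Type*} [m0 : MeasurableSpace Ω] (μ : Measure Ω)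
    (u : ℕ → Ω → ℝ)
    (hindep : iIndepFun u μ)
    {N : ℕ} (g : Fin N → ℕ) (hg : Function.Injective g) :
    iIndepFun (fun k => u (g k)) μ := by
  classical
  rw [iIndepFun_iff_measure_inter_preimage_eq_mul]
  intro S sets hsets
  set sets' : ℕ → Set ℝ := fun i =>
    if h : ∃ k ∈ S, g k = i then sets h.choose else Set.univ with hsets'def
  have hkey : ∀ k ∈ S, sets' (g k) = sets k := by
    intro k hk
    have h : ∃ k' ∈ S, g k' = g k := ⟨k, hk, rfl⟩
    have := h.choose_spec
    have hk' : h.choose = k := hg this.2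
    simp only [hsets'def, dif_pos h, hk']
  have hmeas' : ∀ i ∈ S.image g, MeasurableSet (sets' i) := by
    intro i hi
    simp only [hsets'def]
    split_ifs with h
    · exact hsets _ h.choose_spec.1
    · exact MeasurableSet.univ
  have h1 : (⋂ k ∈ S, u (g k) ⁻¹' sets k) = ⋂ i ∈ S.image g, u i ⁻¹' sets' i := by
    rw [Finset.set_biInter_finset_image]
    exact Set.iInter₂_congr fun k hk => by rw [hkey k hk]
  have h2 : (∏ k ∈ S, μ (u (g k) ⁻¹' sets k)) = ∏ i ∈ S.image g, μ (u i ⁻¹' sets' i) := by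
    rw [Finset.prod_image (fun a ha b hb hab => hg hab)]
    exact Finset.prod_congr rfl fun k hk => by rw [hkey k hk]
  rw [h1, h2]
  exact hindep.measure_inter_preimage_eq_mul _ hmeas'

/-- The joint law of a finite independent family with common marginal `ν` is the product. -/
lemma aux_map_tuple_eq_pi {Ω : Type*} [m0 : MeasurableSpace Ω] (μ : Measure Ω)
    [IsProbabilityMeasure μ] {N : ℕ} (f : Fin N → Ω → ℝ)
    (hmeas : ∀ k, Measurable (f k))
    (hind : iIndepFun f μ)
    (ν : Measure ℝ) [IsProbabilityMeasure ν]
    (hid : ∀ k, Measure.map (f k) μ = ν) :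
    Measure.map (fun ω k => f k ω) μ = Measure.pi (fun _ : Fin N => ν) := by
  refine (Measure.pi_eq fun t ht => ?_).symm
  rw [Measure.map_apply (measurable_pi_lambda _ hmeas) (MeasurableSet.univ_pi ht)]
  have hpre : (fun ω k => f k ω) ⁻¹' Set.pi Set.univ t = ⋂ k, f k ⁻¹' t k := by
    ext ω; simp [Set.mem_univ_pi]
  rw [hpre, hind.meas_iInter (fun k => ⟨t k, ht k, rfl⟩)]
  refine Finset.prod_congr rfl fun k _ => ?_
  rw [← hid k, Measure.map_apply (hmeas k) (ht k)]

/-- Sum over initial coordinates of a `Fin N`-tuple, shifted to `Ioc 0 M`. -/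
lemma aux_sum_shift {N M : ℕ} (hM : M ≤ N) (v : ℕ → ℝ) :
    ∑ k ∈ Finset.univ.filter (fun k : Fin N => (k : ℕ) < M), v ((k : ℕ) + 1)
      = ∑ t ∈ Finset.Ioc 0 M, v t := by
  have h1 : ∑ k ∈ Finset.univ.filter (fun k : Fin N => (k : ℕ) < M), v ((k : ℕ) + 1)
      = ∑ k : Fin N, if (k : ℕ) < M then v ((k : ℕ) + 1) else 0 := by
    rw [Finset.sum_filter]
  have h2 : ∑ k : Fin N, (if (k : ℕ) < M then v ((k : ℕ) + 1) else 0)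
      = ∑ t ∈ Finset.range N, if t < M then v (t + 1) else 0 :=
    Fin.sum_univ_eq_sum_range (fun t => if t < M then v (t + 1) else 0) N
  have h3 : Finset.filter (fun t => t < M) (Finset.range N) = Finset.range M := by
    ext t; simp; omega
  rw [h1, h2, ← Finset.sum_filter, h3, ← Finset.Icc_add_one_left_eq_Ioc, ← Finset.Ico_add_one_right_eq_Icc,
    Finset.sum_Ico_eq_sum_range]
  simp [add_comm]

/-- Key exchangeability step: the set-integral of an in-block increment over a
decimated-sample event does not depend on which in-block increment we take. -/
lemma aux_block_integral_eq
    {Ω : Type*} [m0 : MeasurableSpace Ω] (μ : Measure Ω) [IsProbabilityMeasure μ]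
    (u : ℕ → Ω → ℝ)
    (hmeas : ∀ k, Measurable (u k))
    (hindep : iIndepFun u μ)
    (hident : ∀ j k, Measure.map (u j) μ = Measure.map (u k) μ)
    (m l n_T : ℕ) (hnT : 1 ≤ n_T) (hm : l + 1 ≤ m)
    (Y : Ω → Fin (m + 1) → ℝ)
    (hY : ∀ ω i, Y ω i = ∑ t ∈ Finset.Ioc 0 ((i : ℕ) * n_T), u t ω)
    (j j' : ℕ) (hj : j ∈ Finset.Ioc (l * n_T) ((l + 1) * n_T))
    (hj' : j' ∈ Finset.Ioc (l * n_T) ((l + 1) * n_T))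
    (B : Set (Fin (m + 1) → ℝ)) (hB : MeasurableSet B) :
    ∫ ω in Y ⁻¹' B, u j ω ∂μ = ∫ ω in Y ⁻¹' B, u j' ω ∂μ := by
  classical
  simp only [Finset.mem_Ioc] at hj hj'
  set N := m * n_T with hN
  have hbN : (l + 1) * n_T ≤ N := Nat.mul_le_mul hm (le_refl n_T)
  have hjF : j - 1 < N := by omega
  have hj'F : j' - 1 < N := by omega
  set jF : Fin N := ⟨j - 1, hjF⟩ with hjFdef
  set j'F : Fin N := ⟨j' - 1, hj'F⟩ with hj'Fdef
  set e : Equiv.Perm (Fin N) := Equiv.swap jF j'F with hedef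
  set g : Fin N → ℕ := fun k => (k : ℕ) + 1 with hgdef
  have hginj : Function.Injective g := by
    intro a b hab
    simp only [hgdef] at hab
    exact Fin.ext (by omega)
  set ν : Measure ℝ := Measure.map (u 1) μ with hνdef
  haveI : IsProbabilityMeasure ν := Measure.isProbabilityMeasure_map (hmeas 1).aemeasurable
  set Ψ : (Fin N → ℝ) → Fin (m + 1) → ℝ := fun v i =>
    ∑ k ∈ Finset.univ.filter (fun k : Fin N => (k : ℕ) < (i : ℕ) * n_T), v k with hΨdef
  have hΨmeas : Measurable Ψ :=
    measurable_pi_lambda _ fun i => Finset.measurable_sum _ fun k _ => measurable_pi_apply k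
  -- the two tuples
  set T₁ : Ω → Fin N → ℝ := fun ω k => u (g k) ω with hT₁def
  set T₂ : Ω → Fin N → ℝ := fun ω k => u (g (e k)) ω with hT₂def
  have hT₁meas : Measurable T₁ := measurable_pi_lambda _ fun k => hmeas _
  have hT₂meas : Measurable T₂ := measurable_pi_lambda _ fun k => hmeas _
  -- both tuples have law ν^⊗N
  have hmap₁ : Measure.map T₁ μ = Measure.pi (fun _ : Fin N => ν) :=
    aux_map_tuple_eq_pi μ _ (fun k => hmeas _)
      (aux_iIndepFun_reindex μ u hindep g hginj) ν (fun k => hident _ 1)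
  have hmap₂ : Measure.map T₂ μ = Measure.pi (fun _ : Fin N => ν) :=
    aux_map_tuple_eq_pi μ _ (fun k => hmeas _)
      (aux_iIndepFun_reindex μ u hindep (g ∘ e) (hginj.comp e.injective)) ν
      (fun k => hident _ 1)
  -- Y = Ψ ∘ T₁ and Y = Ψ ∘ T₂
  have hcomp₁ : ∀ ω, Ψ (T₁ ω) = Y ω := by
    intro ω; funext i
    have hiN : (i : ℕ) * n_T ≤ N := Nat.mul_le_mul (by omega : (i : ℕ) ≤ m) (le_refl n_T)
    simp only [hΨdef, hT₁def, hgdef]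
    rw [aux_sum_shift hiN (fun t => u t ω), hY]
  have hblock : ∀ i : ℕ, ((j - 1 : ℕ) < i * n_T ↔ (j' - 1 : ℕ) < i * n_T) := by
    intro i
    rcases le_or_gt i l with h | h
    · have h1 : i * n_T ≤ l * n_T := Nat.mul_le_mul h (le_refl n_T)
      omega
    · have h1 : (l + 1) * n_T ≤ i * n_T := Nat.mul_le_mul h (le_refl n_T)
      omega
  have hmem : ∀ (i : Fin (m + 1)) (k : Fin N),
      ((k : ℕ) < (i : ℕ) * n_T ↔ ((e k : Fin N) : ℕ) < (i : ℕ) * n_T) := by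
    intro i k
    rcases eq_or_ne k jF with rfl | hk1
    · rw [hedef, Equiv.swap_apply_left]
      exact hblock (i : ℕ)
    rcases eq_or_ne k j'F with rfl | hk2
    · rw [hedef, Equiv.swap_apply_right]
      exact (hblock (i : ℕ)).symm
    · rw [hedef, Equiv.swap_apply_of_ne_of_ne hk1 hk2]
  have hcomp₂ : ∀ ω, Ψ (T₂ ω) = Y ω := by
    intro ω
    have : Ψ (T₂ ω) = Ψ (T₁ ω) := by
      funext i
      simp only [hΨdef, hT₂def, hT₁def]
      refine Finset.sum_equiv e (fun k => ?_) (fun k _ => rfl)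
      simp only [Finset.mem_filter, Finset.mem_univ, true_and]
      exact hmem i k
    rw [this, hcomp₁]
  -- rewrite both sides via the tuples
  have hpre₁ : Y ⁻¹' B = T₁ ⁻¹' (Ψ ⁻¹' B) := by
    ext ω; simp [Set.mem_preimage, hcomp₁ ω]
  have hpre₂ : Y ⁻¹' B = T₂ ⁻¹' (Ψ ⁻¹' B) := by
    ext ω; simp [Set.mem_preimage, hcomp₂ ω]
  have hgjF : g jF = j := by simp only [hgdef, hjFdef]; omega
  have hgej'F : g (e jF) = j' := by
    rw [hedef, Equiv.swap_apply_left]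
    simp only [hgdef, hj'Fdef]; omega
  have hL : ∫ ω in Y ⁻¹' B, u j ω ∂μ
      = ∫ v in Ψ ⁻¹' B, v jF ∂(Measure.pi (fun _ : Fin N => ν)) := by
    rw [← hmap₁, setIntegral_map (hΨmeas hB)
      (measurable_pi_apply jF).aestronglyMeasurable hT₁meas.aemeasurable, ← hpre₁]
    refine setIntegral_congr_fun ?_ ?_
    · have hYmeas : Measurable Y := by
        have hYeq : Y = fun ω => Ψ (T₁ ω) := by funext ω; rw [hcomp₁]
        rw [hYeq]; exact hΨmeas.comp hT₁meas
      exact hYmeas hB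
    · intro ω _
      simp only [hT₁def, hgjF]
  have hR : ∫ ω in Y ⁻¹' B, u j' ω ∂μ
      = ∫ v in Ψ ⁻¹' B, v jF ∂(Measure.pi (fun _ : Fin N => ν)) := by
    rw [← hmap₂, setIntegral_map (hΨmeas hB)
      (measurable_pi_apply jF).aestronglyMeasurable hT₂meas.aemeasurable, ← hpre₂]
    refine setIntegral_congr_fun ?_ ?_
    · have hYmeas : Measurable Y := by
        have hYeq : Y = fun ω => Ψ (T₁ ω) := by funext ω; rw [hcomp₁]
        rw [hYeq]; exact hΨmeas.comp hT₁meas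
      exact hYmeas hB
    · intro ω _
      simp only [hT₂def, hgej'F]
  rw [hL, hR]

/-- MMSE interpolation of a Lévy-type discrete process: with `s[0] = 0` and i.i.d.
integrable increments `u[k] = s[k] − s[k−1]`, for `l·n_T < θ < (l+1)·n_T` the conditional
expectation of `s[θ]` given the decimated samples `(s[i·n_T])_{i=0}^m` is the linear
interpolation `(1−λ_θ) s[l·n_T] + λ_θ s[(l+1)·n_T]` with `λ_θ = (θ − l·n_T)/n_T`. -/
theorem levy_mmse_interpolation_linear
    {Ω : Type*} [m0 : MeasurableSpace Ω] (μ : Measure Ω) [IsProbabilityMeasure μ]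
    (u : ℕ → Ω → ℝ)
    (hmeas : ∀ k, Measurable (u k))
    (hindep : iIndepFun u μ)
    (hident : ∀ j k, Measure.map (u j) μ = Measure.map (u k) μ)
    (hint : ∀ k, Integrable (u k) μ)
    (s : ℕ → Ω → ℝ) (hs : ∀ k ω, s k ω = ∑ j ∈ Finset.Icc 1 k, u j ω)
    (m l n_T θ : ℕ) (hnT : 1 ≤ n_T)
    (hθ₁ : l * n_T < θ) (hθ₂ : θ < (l + 1) * n_T) (hm : l + 1 ≤ m) :
    μ[s θ | MeasurableSpace.comap (fun ω => fun i : Fin (m + 1) => s (i * n_T) ω)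
        inferInstance] =ᵐ[μ]
      fun ω =>
        (1 - ((θ : ℝ) - l * n_T) / n_T) * s (l * n_T) ω +
          (((θ : ℝ) - l * n_T) / n_T) * s ((l + 1) * n_T) ω := by
  classical
  set a := l * n_T with hadef
  set b := (l + 1) * n_T with hbdef
  have hab : a < b := lt_trans hθ₁ hθ₂
  have hIoc : ∀ k ω, s k ω = ∑ t ∈ Finset.Ioc 0 k, u t ω := by
    intro k ω; rw [hs, ← Finset.Icc_add_one_left_eq_Ioc, zero_add]
  have hsm : ∀ k, Measurable (s k) := by
    intro k
    have hk : s k = fun ω => ∑ t ∈ Finset.Ioc 0 k, u t ω := funext (hIoc k)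
    rw [hk]; exact Finset.measurable_sum _ fun t _ => hmeas t
  have hsint : ∀ k, Integrable (s k) μ := by
    intro k
    have hk : s k = fun ω => ∑ t ∈ Finset.Ioc 0 k, u t ω := funext (hIoc k)
    rw [hk]; exact integrable_finset_sum _ fun t _ => hint t
  set lam : ℝ := ((θ : ℝ) - l * n_T) / n_T with hlamdef
  set Y : Ω → Fin (m + 1) → ℝ := fun ω => fun i : Fin (m + 1) => s (i * n_T) ω with hYdef
  have hYmeas : Measurable Y := measurable_pi_lambda _ fun i => hsm _
  have hle : MeasurableSpace.comap Y inferInstance ≤ m0 := hYmeas.comap_le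
  have hg_int : Integrable (fun ω => (1 - lam) * s a ω + lam * s b ω) μ :=
    ((hsint a).const_mul _).add ((hsint b).const_mul _)
  have hn0 : (n_T : ℝ) ≠ 0 := by positivity
  refine (ae_eq_condExp_of_forall_setIntegral_eq hle (hsint θ)
    (fun A _ _ => hg_int.integrableOn) ?_ ?_).symm
  · -- set-integral equality
    intro A hA _
    rw [MeasurableSpace.measurableSet_comap] at hA
    obtain ⟨B, hB, rfl⟩ := hA
    set c : ℝ := ∫ ω in Y ⁻¹' B, u (a + 1) ω ∂μ with hcdef
    have key : ∀ j ∈ Finset.Ioc a b, (∫ ω in Y ⁻¹' B, u j ω ∂μ) = c := by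
      intro j hj
      exact aux_block_integral_eq μ u hmeas hindep hident m l n_T hnT hm Y
        (fun ω i => hIoc _ ω) j (a + 1) hj
        (by simp only [Finset.mem_Ioc]; omega) B hB
    have hsum : ∀ d, a ≤ d → d ≤ b →
        (∫ ω in Y ⁻¹' B, s d ω ∂μ)
          = (∫ ω in Y ⁻¹' B, s a ω ∂μ) + ((d : ℝ) - (a : ℝ)) * c := by
      intro d had hdb
      have hsplit : ∀ ω, s d ω = s a ω + ∑ t ∈ Finset.Ioc a d, u t ω := by
        intro ω
        rw [hIoc, hIoc, ← Finset.sum_Ioc_consecutive (fun t => u t ω) (Nat.zero_le a) had]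
      simp only [hsplit]
      rw [integral_add ((hsint a).integrableOn)
        (integrable_finset_sum _ fun t _ => (hint t).integrableOn),
        integral_finset_sum _ fun t _ => (hint t).integrableOn]
      congr 1
      rw [Finset.sum_congr rfl fun t ht => key t
        (Finset.Ioc_subset_Ioc le_rfl hdb ht)]
      rw [Finset.sum_const, Nat.card_Ioc, nsmul_eq_mul, Nat.cast_sub had]
    have hθa : a ≤ θ := le_of_lt hθ₁
    have hθb : θ ≤ b := le_of_lt hθ₂
    have hX : (∫ ω in Y ⁻¹' B, ((1 - lam) * s a ω + lam * s b ω) ∂μ)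
        = (1 - lam) * (∫ ω in Y ⁻¹' B, s a ω ∂μ)
          + lam * (∫ ω in Y ⁻¹' B, s b ω ∂μ) := by
      rw [integral_add ((hsint a).integrableOn.const_mul _)
        ((hsint b).integrableOn.const_mul _), integral_const_mul, integral_const_mul]
    rw [hX, hsum θ hθa hθb, hsum b (le_of_lt hab) le_rfl]
    have hba : ((b : ℝ) - (a : ℝ)) = (n_T : ℝ) := by
      rw [hadef, hbdef]; push_cast; ring
    have hlamn : lam * (n_T : ℝ) = (θ : ℝ) - (a : ℝ) := by
      rw [hlamdef, div_mul_cancel₀ _ hn0, hadef]; push_cast; ring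
    rw [hba]
    linear_combination c * hlamn
  · -- a.e. strong measurability w.r.t. the comap σ-algebra
    have hl1 : l < m + 1 := by omega
    have hl2 : l + 1 < m + 1 := by omega
    have hfe : (fun ω => (1 - lam) * s a ω + lam * s b ω)
        = fun ω => (1 - lam) * Y ω ⟨l, hl1⟩ + lam * Y ω ⟨l + 1, hl2⟩ := rfl
    rw [hfe]
    have hYc : Measurable[MeasurableSpace.comap Y inferInstance] Y :=
      Measurable.of_comap_le le_rfl
    exact (Measurable.stronglyMeasurable
      ((((measurable_pi_apply _).comp hYc).const_mul _).add
        (((measurable_pi_apply _).comp hYc).const_mul _))).aestronglyMeasurable
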